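/- Under the setting of the inexact subgradient method x_{k+1} = P_X(x_k − v_k g_k) with g_k ∈ ∂*_ε f(x_k) ∩ S and v_k > 0, if f(x_k) > f* + ε then for each x* ∈ X*: ‖x_{k+1} − x*‖² ≤ ‖x_k − x*‖² − 2v_k·((f(x_k) − f* − ε)/L)^{1/p} + v_k². -/

import Mathlib

theorem stmt11 (n : ℕ) (X : Set (EuclideanSpace ℝ (Fin n)))
    (hXne : X.Nonempty) (hXcl : IsClosed X) (hXcv : Convex ℝ X)
    (f : EuclideanSpace ℝ (Fin n) → ℝ) (hfc : Continuous f)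
    (hfq : ∀ x y : EuclideanSpace ℝ (Fin n), ∀ α : ℝ, α ∈ Set.Icc (0 : ℝ) 1 →
      f ((1 - α) • x + α • y) ≤ max (f x) (f y))
    (fstar : ℝ) (Xstar : Set (EuclideanSpace ℝ (Fin n)))
    (hXstar : Xstar = {z ∈ X | f z = fstar})
    (hmin : ∀ y ∈ X, fstar ≤ f y) (hXsne : Xstar.Nonempty)
    (p L : ℝ) (hp : p ∈ Set.Ioc (0 : ℝ) 1) (hL : 0 < L)
    (hHolder : ∀ x, f x - fstar ≤ L * Metric.infDist x Xstar ^ p)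
    (ε : ℝ) (hε : 0 < ε)
    (xk : EuclideanSpace ℝ (Fin n)) (hxk : xk ∈ X)
    (v : ℝ) (hv : 0 < v)
    (g : EuclideanSpace ℝ (Fin n)) (hg : ‖g‖ = 1)
    (hsub : ∀ y, f y < f xk - ε → (inner ℝ g (y - xk) : ℝ) ≤ 0)
    (xnext : EuclideanSpace ℝ (Fin n)) (hxnX : xnext ∈ X)
    (hproj : ∀ y ∈ X, ‖xnext - (xk - v • g)‖ ≤ ‖y - (xk - v • g)‖)
    (hfxk : fstar + ε < f xk) :
    ∀ xs ∈ Xstar,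
      ‖xnext - xs‖ ^ 2 ≤
        ‖xk - xs‖ ^ 2 - 2 * v * ((f xk - fstar - ε) / L) ^ (1 / p) + v ^ 2 := by

  intro xs hxs
  have hxsX : xs ∈ X := by rw [hXstar] at hxs; exact hxs.1
  have hfxs : f xs = fstar := by rw [hXstar] at hxs; exact hxs.2
  set z := xk - v • g with hz
  -- projection characterization
  have hproj' : ∀ w ∈ X, (inner ℝ (z - xnext) (w - xnext) : ℝ) ≤ 0 := by
    have hbdd : BddBelow (Set.range fun w : X => ‖z - (w : EuclideanSpace ℝ (Fin n))‖) :=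
      ⟨0, by rintro _ ⟨w, rfl⟩; exact norm_nonneg _⟩
    have hinf : ‖z - xnext‖ = ⨅ w : X, ‖z - (w : EuclideanSpace ℝ (Fin n))‖ := by
      haveI : Nonempty X := ⟨⟨xk, hxk⟩⟩
      apply le_antisymm
      · apply le_ciInf
        intro w
        have h := hproj w w.2
        rwa [norm_sub_rev xnext, norm_sub_rev (w : EuclideanSpace ℝ (Fin n))] at h
      · exact ciInf_le hbdd ⟨xnext, hxnX⟩
    exact (norm_eq_iInf_iff_real_inner_le_zero hXcv hxnX).mp hinf
  have key : ‖xnext - xs‖ ^ 2 ≤ ‖z - xs‖ ^ 2 := by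
    have h1 := hproj' xs hxsX
    have hsplit : z - xs = (z - xnext) + (xnext - xs) := by abel
    have expand : ‖z - xs‖ ^ 2 =
        ‖z - xnext‖ ^ 2 + 2 * (inner ℝ (z - xnext) (xnext - xs) : ℝ) + ‖xnext - xs‖ ^ 2 := by
      rw [hsplit, norm_add_sq_real]
    have hneg : (inner ℝ (z - xnext) (xnext - xs) : ℝ) = - (inner ℝ (z - xnext) (xs - xnext) : ℝ) := by
      rw [← inner_neg_right]
      congr 1
      abel
    nlinarith [norm_nonneg (z - xnext), sq_nonneg (‖z - xnext‖)]
  set D := f xk - fstar - ε with hD_def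
  have hD : 0 < D := by simp only [hD_def]; linarith
  have hDL : 0 < D / L := div_pos hD hL
  set r := (D / L) ^ (1 / p) with hr_def
  have hr : 0 < r := Real.rpow_pos_of_pos hDL _
  have hrp : r ^ p = D / L := by
    rw [hr_def, ← Real.rpow_mul hDL.le, one_div_mul_cancel (ne_of_gt hp.1), Real.rpow_one]
  have hineq : ∀ t : ℝ, 0 ≤ t → t < r → t ≤ (inner ℝ g (xk - xs) : ℝ) := by
    intro t ht htr
    have hy : f (xs + t • g) < f xk - ε := by
      have h1 : f (xs + t • g) - fstar ≤ L * Metric.infDist (xs + t • g) Xstar ^ p := hHolder _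
      have h2 : Metric.infDist (xs + t • g) Xstar ≤ t := by
        have h3 := Metric.infDist_le_dist_of_mem (x := xs + t • g) hxs
        have h4 : dist (xs + t • g) xs = t := by
          rw [dist_eq_norm]
          simp [norm_smul, hg, abs_of_nonneg ht]
        linarith [h3, h4.le]
      have h5 : Metric.infDist (xs + t • g) Xstar ^ p < r ^ p :=
        Real.rpow_lt_rpow Metric.infDist_nonneg (lt_of_le_of_lt h2 htr) hp.1
      have h6 : L * Metric.infDist (xs + t • g) Xstar ^ p < L * (D / L) :=
        by rw [← hrp]; exact (mul_lt_mul_iff_right₀ hL).mpr h5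
      have h7 : L * (D / L) = D := by field_simp
      simp only [hD_def] at h7
      linarith
    have h8 := hsub _ hy
    have h9 : (inner ℝ g (xs + t • g - xk) : ℝ) = t - (inner ℝ g (xk - xs) : ℝ) := by
      have : xs + t • g - xk = t • g - (xk - xs) := by abel
      rw [this, inner_sub_right, real_inner_smul_right, real_inner_self_eq_norm_sq, hg]
      ring
    linarith
  have hginner : r ≤ (inner ℝ g (xk - xs) : ℝ) := by
    by_contra hcon
    push_neg at hcon
    set c := (inner ℝ g (xk - xs) : ℝ)
    set t := max 0 ((c + r) / 2) with ht_def
    have ht0 : 0 ≤ t := le_max_left _ _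
    have htr : t < r := by
      apply max_lt hr
      linarith
    have := hineq t ht0 htr
    have : (c + r) / 2 ≤ c := le_trans (le_max_right _ _) this
    linarith
  have hz2 : ‖z - xs‖ ^ 2 = ‖xk - xs‖ ^ 2 - 2 * v * (inner ℝ g (xk - xs) : ℝ) + v ^ 2 := by
    have hsplit : z - xs = (xk - xs) - v • g := by rw [hz]; abel
    rw [hsplit, norm_sub_sq_real, real_inner_smul_right, norm_smul, hg,
      real_inner_comm]
    rw [Real.norm_of_nonneg hv.le]
    ring
  have hmono : -2 * v * (inner ℝ g (xk - xs) : ℝ) ≤ -2 * v * r := by nlinarith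
  calc ‖xnext - xs‖ ^ 2 ≤ ‖z - xs‖ ^ 2 := key
    _ = ‖xk - xs‖ ^ 2 - 2 * v * (inner ℝ g (xk - xs) : ℝ) + v ^ 2 := hz2
    _ ≤ ‖xk - xs‖ ^ 2 - 2 * v * r + v ^ 2 := by nlinarith
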